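/- If Σ is a signed graph with node set [n], then every vertex of the inside-out polytope ([0,1]^n, H''[Σ]) is half-integral; that is, every point of [0,1]^n that is an intersection point formed by hyperplanes of H''[Σ] and facet hyperplanes of [0,1]^n lies in (1/2)ℤ^n, where H''[Σ] := H[Σ] + (1/2)(1,…,1). -/
import Mathlib


open scoped Classical
open MeasureTheory

noncomputable section

/-- We model `ℝ^d` as `Fin d → ℝ`. -/
abbrev EucSp (d : ℕ) : Type := Fin d → ℝ

/-- An (affine, nondegenerate) hyperplane in `ℝ^d`: the solution set of a nontrivial
affine-linear equation. -/
def IsAffineHyperplane {d : ℕ} (h : Set (EucSp d)) : Prop :=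
  ∃ (a : EucSp d) (b : ℝ), a ≠ 0 ∧ h = {x : EucSp d | (∑ i, a i * x i) = b}

/-- The union of the hyperplanes of an arrangement. -/
def arrUnion {d : ℕ} (H : Finset (Set (EucSp d))) : Set (EucSp d) :=
  ⋃ h ∈ H, (h : Set (EucSp d))

/-- The flats of an arrangement: all nonempty intersections of subcollections
(the empty intersection being the whole space `ℝ^d`). -/
def flatsOf {d : ℕ} (H : Finset (Set (EucSp d))) : Finset (Set (EucSp d)) :=
  (H.powerset.image fun S => ⋂ h ∈ S, (h : Set (EucSp d))).filter fun u => u.Nonempty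

/-- `μ` is the Möbius function of the intersection poset of flats of `H`, ordered by
reverse inclusion (mimimum element `Set.univ`):  `μ a b` is defined whenever `b ⊆ a`
by the standard recursion `∑_{b ⊆ w ⊆ a} μ a w = δ_{a b}`. -/
def IsMobiusOf {d : ℕ} (H : Finset (Set (EucSp d)))
    (μ : Set (EucSp d) → Set (EucSp d) → ℤ) : Prop :=
  ∀ a ∈ flatsOf H, ∀ b ∈ flatsOf H, b ⊆ a →
    (∑ w ∈ (flatsOf H).filter fun w => b ⊆ w ∧ w ⊆ a, μ a w) = if a = b then 1 else 0

/-- A discrete (i.e. locally finite) set of points in `ℝ^d`. -/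
def LocallyFiniteSet {d : ℕ} (D : Set (EucSp d)) : Prop :=
  ∀ x : EucSp d, ∃ U ∈ nhds x, (D ∩ U).Finite

/-- The arrangement `H` is transverse to the convex set `C`: every flat meeting the closure
of `C` meets its relative interior, and `C` lies in no hyperplane of `H`. -/
def TransverseTo {d : ℕ} (H : Finset (Set (EucSp d))) (C : Set (EucSp d)) : Prop :=
  (∀ u ∈ flatsOf H, (u ∩ closure C).Nonempty → (u ∩ intrinsicInterior ℝ C).Nonempty) ∧
    ∀ h ∈ H, ¬ C ⊆ h

/-- The closed regions determined by the arrangement `H` inside the set `S`: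
topological closures of connected components of `S ∖ ⋃H`. -/
def closedRegionsOf {d : ℕ} (S : Set (EucSp d)) (H : Finset (Set (EucSp d))) :
    Set (Set (EucSp d)) :=
  {R | ∃ y ∈ S \ arrUnion H, R = closure (connectedComponentIn (S \ arrUnion H) y)}

/-- Multiplicity of a point: the number of closed regions (components taken inside `S`)
containing it, provided the point lies in `C`; otherwise `0`. -/
def multOf {d : ℕ} (C S : Set (EucSp d)) (H : Finset (Set (EucSp d))) (x : EucSp d) : ℕ :=
  if x ∈ C then {R | R ∈ closedRegionsOf S H ∧ x ∈ R}.ncard else 0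

/-- The dimension of a flat (an affine subspace), as the rank of its direction. -/
def flatDim {d : ℕ} (u : Set (EucSp d)) : ℕ := Module.finrank ℝ (vectorSpan ℝ u)


/-- The integer lattice `ℤ^n ⊆ ℝ^n`. -/
def integerLattice (n : ℕ) : Set (EucSp n) := {x : EucSp n | ∀ i, ∃ k : ℤ, x i = (k : ℝ)}

/-- The unit cube `[0,1]^n`. -/
def unitCube (n : ℕ) : Set (EucSp n) := Set.pi Set.univ fun _ : Fin n => Set.Icc (0 : ℝ) 1

/-- The value `+1` or `−1` of a sign. -/
def sgnVal (b : Bool) : ℤ := if b then 1 else -1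

/-- A signed graph on node set `[n]` is given by: `m` signed edges (links and loops) with
endpoints `ends e : Sym2 (Fin n)` and sign `sgn e`, a set `half` of nodes carrying
halfedges, and a flag `loose` indicating the presence of a loose edge.
`SgProper` says the coloring `x` is proper. -/
def SgProper {n m : ℕ} (ends : Fin m → Sym2 (Fin n)) (sgn : Fin m → Bool)
    (half : Finset (Fin n)) (loose : Bool) (x : Fin n → ℤ) : Prop :=
  loose = false ∧
  (∀ e : Fin m, ∀ i j : Fin n, ends e = s(i, j) → x j ≠ sgnVal (sgn e) * x i) ∧
  ∀ i ∈ half, x i ≠ 0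

/-- The chromatic polynomial of a signed graph: `sgChi … c = χ_Σ(2c+1)` counts proper
colorings with values in `{−c, …, 0, …, c}`. -/
def sgChi {n m : ℕ} (ends : Fin m → Sym2 (Fin n)) (sgn : Fin m → Bool)
    (half : Finset (Fin n)) (loose : Bool) (c : ℕ) : ℕ :=
  Set.ncard {x : Fin n → ℤ | (∀ i, |x i| ≤ (c : ℤ)) ∧ SgProper ends sgn half loose x}

/-- The zero-free chromatic polynomial of a signed graph: `sgChiStar … c = χ*_Σ(2c)` counts
proper colorings with values in `±{1, …, c}`. -/
def sgChiStar {n m : ℕ} (ends : Fin m → Sym2 (Fin n)) (sgn : Fin m → Bool)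
    (half : Finset (Fin n)) (loose : Bool) (c : ℕ) : ℕ :=
  Set.ncard {x : Fin n → ℤ |
    (∀ i, x i ≠ 0 ∧ |x i| ≤ (c : ℤ)) ∧ SgProper ends sgn half loose x}

/-- The signed-graphic hyperplane arrangement `H[Σ]` in `ℝ^n`: the hyperplanes
`x_j = ε x_i` for signed edges, `x_i = 0` for halfedges, and the degenerate hyperplane
`ℝ^n` when a loose edge is present (a positive loop also yields `ℝ^n`). -/
def sgArrangement {n m : ℕ} (ends : Fin m → Sym2 (Fin n)) (sgn : Fin m → Bool)
    (half : Finset (Fin n)) (loose : Bool) : Finset (Set (EucSp n)) :=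
  ((Finset.univ : Finset (Fin m)).image fun e =>
      {x : EucSp n | ∀ i j : Fin n, ends e = s(i, j) → x j = (sgnVal (sgn e) : ℝ) * x i}) ∪
    (half.image fun i => {x : EucSp n | x i = 0}) ∪
    (if loose then {(Set.univ : Set (EucSp n))} else ∅)

/-- The translated arrangement `H''[Σ] = H[Σ] + ½(1,…,1)`. -/
def sgArrangementShifted {n m : ℕ} (ends : Fin m → Sym2 (Fin n)) (sgn : Fin m → Bool)
    (half : Finset (Fin n)) (loose : Bool) : Finset (Set (EucSp n)) :=
  (sgArrangement ends sgn half loose).image fun h =>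
    (fun y : EucSp n => y + (fun _ : Fin n => (1 / 2 : ℝ))) '' h

/-- Lemma 5.7: the inside-out polytope `([0,1]^n, H''[Σ])` of a signed
graph has half-integral vertices: every point of `[0,1]^n` cut out as the intersection of a
collection of hyperplanes of `H''[Σ]` and facet hyperplanes of the cube lies in `½ℤ^n`. -/
theorem statement15 (n m : ℕ) (ends : Fin m → Sym2 (Fin n)) (sgn : Fin m → Bool)
    (half : Finset (Fin n)) (loose : Bool) :
    ∀ x : EucSp n, x ∈ unitCube n →
      ∀ S : Set (Set (EucSp n)),
        (∀ h ∈ S, h ∈ sgArrangementShifted ends sgn half loose ∨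
          ∃ i : Fin n, h = {y : EucSp n | y i = 0} ∨ h = {y : EucSp n | y i = 1}) →
        ⋂₀ S = {x} →
        ∀ i : Fin n, ∃ k : ℤ, x i = (k : ℝ) / 2 := by
  intro x _ S hS hinter
  classical
  set g : ℝ → ℝ := fun t => Real.sin (2 * Real.pi * t) with hg
  have gneg : ∀ a b : ℝ, a - 1/2 = -(b - 1/2) → g a = - g b := by
    intro a b hab
    have ha : a = 1 - b := by linarith
    subst ha
    have h2 : 2 * Real.pi * (1 - b) = 2 * Real.pi - 2 * Real.pi * b := by ring
    simp only [hg, h2, Real.sin_sub, Real.sin_two_pi, Real.cos_two_pi]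
    ring
  have ghalf : g (1/2 : ℝ) = 0 := by
    show Real.sin (2 * Real.pi * (1/2 : ℝ)) = 0
    rw [show 2 * Real.pi * (1/2 : ℝ) = Real.pi by ring]
    exact Real.sin_pi
  have g0 : g 0 = 0 := by simp [hg]
  have g1 : g 1 = 0 := by simp [hg, Real.sin_two_pi]
  set y : EucSp n := fun j => x j + g (x j) with hy
  have hxmem : x ∈ ⋂₀ S := by rw [hinter]; exact rfl
  have hymem : y ∈ ⋂₀ S := by
    intro h hh
    have hxh : x ∈ h := hxmem h hh
    rcases hS h hh with hA | ⟨j, hj | hj⟩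
    · simp only [sgArrangementShifted, Finset.mem_image] at hA
      obtain ⟨h0, hh0, rfl⟩ := hA
      obtain ⟨z, hz, hzx⟩ := hxh
      have hzx' : ∀ j, x j = z j + 1/2 := by
        intro j
        have := congrFun hzx j
        simp only [Pi.add_apply] at this
        linarith [this]
      simp only [sgArrangement, Finset.mem_union, Finset.mem_image,
        Finset.mem_univ, true_and] at hh0
      -- define the preimage candidate for y
      refine ⟨fun j => y j - 1/2, ?_, ?_⟩
      · rcases hh0 with (⟨e, rfl⟩ | ⟨j, hjh, rfl⟩) | hloose
        · -- edge hyperplane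
          intro i j hij
          have hz' : z j = (sgnVal (sgn e) : ℝ) * z i := hz i j hij
          cases hse : sgn e with
          | true =>
            have h1 : z j = z i := by
              rw [hse] at hz'; simpa [sgnVal] using hz'
            have hxij : x j = x i := by rw [hzx' j, hzx' i, h1]
            simp [hy, hxij, hse, sgnVal]
          | false =>
            have h1 : z j = -z i := by
              rw [hse] at hz'
              simpa [sgnVal] using hz'
            have hxij : x j - 1/2 = -(x i - 1/2) := by
              rw [hzx' j, hzx' i]; linarith [h1]
            have hgij : g (x j) = - g (x i) := gneg _ _ hxij
            simp only [hy, hse, sgnVal, if_false]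
            push_cast
            linarith [hgij, hxij]
        · -- halfedge hyperplane
          have hzj : z j = 0 := hz
          have hxj : x j = 1/2 := by rw [hzx' j, hzj]; ring
          show x j + g (x j) - 1/2 = 0
          rw [hxj, ghalf]; norm_num
        · -- loose edge
          have : loose = true := by
            by_contra hl
            simp [Bool.not_eq_true] at hl
            simp [hl] at hloose
          rw [this] at hloose
          simp only [if_true, Finset.mem_singleton] at hloose
          rw [hloose]; trivial
      · funext j
        simp only [Pi.add_apply]
        ring
    · -- facet y_j = 0
      have hxj : x j = 0 := by rw [hj] at hxh; exact hxh
      rw [hj]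
      show y j = 0
      simp [hy, hxj, g0]
    · -- facet y_j = 1
      have hxj : x j = 1 := by rw [hj] at hxh; exact hxh
      rw [hj]
      show y j = 1
      simp [hy, hxj, g1]
  have hyx : y = x := by
    rw [hinter] at hymem; exact hymem
  intro i
  have hgi : g (x i) = 0 := by
    have := congrFun hyx i
    simp only [hy] at this
    linarith [this]
  rw [hg] at hgi
  obtain ⟨k, hk⟩ := Real.sin_eq_zero_iff.mp hgi
  refine ⟨k, ?_⟩
  have hpi : Real.pi ≠ 0 := Real.pi_ne_zero
  field_simp
  have : (k : ℝ) * Real.pi = 2 * Real.pi * x i := hk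
  nlinarith [this, Real.pi_pos]
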